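/- Let A be a unital C*-algebra with an algebra F of finite type elements, let (p_α) be an approximate unit of F consisting of projections, and let p ∈ F be a projection. Then for every ε > 0 there exist an index α₀ and a projection p' ∈ A with p' ∼ p, p' ≤ p_{α₀}, and ‖p - p'‖ < ε. -/

import Mathlib

/-- A projection in a C*-algebra: a self-adjoint idempotent. -/
def IsProjection {A : Type*} [Ring A] [StarRing A] (p : A) : Prop :=
  star p = p ∧ p * p = p

/-- Murray–von Neumann equivalence: `p ∼ q` iff there is `v` with `v v* = p`
and `v* v = q`. -/
def MvNEquiv {A : Type*} [Ring A] [StarRing A] (p q : A) : Prop :=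
  ∃ v : A, v * star v = p ∧ star v * v = q

/-- `(u α)_{α}` (indexed by the directed set `(ι, rel)`) is an approximate unit
for `F` consisting of projections. -/
structure IsApproxUnit {A : Type*} [NormedRing A] [StarRing A] (F : Set A)
    {ι : Type} (rel : ι → ι → Prop) (u : ι → A) : Prop where
  nonempty : Nonempty ι
  directed : ∀ α β : ι, ∃ γ : ι, rel α γ ∧ rel β γ
  proj : ∀ α, IsProjection (u α)
  mem : ∀ α, u α ∈ F
  approx : ∀ f ∈ F, ∀ ε : ℝ, 0 < ε → ∃ α, ∀ β, rel α β → ‖f - u β * f‖ < ε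

/-- `F` is an algebra of finite type elements: a self-adjoint two-sided ideal
with an approximate unit consisting of projections, satisfying the
orthogonalization property (iii). -/
structure IsFiniteType {A : Type*} [NormedRing A] [StarRing A] (F : Set A) : Prop where
  zero_mem : (0 : A) ∈ F
  add_mem : ∀ a ∈ F, ∀ b ∈ F, a + b ∈ F
  mul_mem_left : ∀ (a : A), ∀ b ∈ F, a * b ∈ F
  mul_mem_right : ∀ (a : A), ∀ b ∈ F, b * a ∈ F
  star_mem : ∀ a ∈ F, star a ∈ F
  approx_unit : ∃ (ι : Type) (rel : ι → ι → Prop) (u : ι → A), IsApproxUnit F rel u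
  orth : ∀ p ∈ F, ∀ q ∈ F, IsProjection p → IsProjection q →
    ∃ v : A, v * star v = q ∧ IsProjection (star v * v + p)

/-- `b` is a `(p,q)`-inverse of `a`. -/
def IsPQInv {A : Type*} [Ring A] (a p q b : A) : Prop :=
  b = (1 - p) * b * (1 - q) ∧ (1 - q) * a * (1 - p) * b = 1 - q ∧
    b * ((1 - q) * a * (1 - p)) = 1 - p

/-- `a` is invertible up to `(p,q)`. -/
def InvUpTo {A : Type*} [Ring A] (a p q : A) : Prop := ∃ b, IsPQInv a p q b

lemma commute_cfc_of_commute {A : Type*} [CStarAlgebra A]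
    {b c : A} (hb : IsSelfAdjoint b) (hc : Commute c b) (f : ℝ → ℝ) :
    Commute c (cfc f b) := by
  by_cases hf : ContinuousOn f (spectrum ℝ b)
  · rw [cfc_apply f b hb hf]
    set φ := cfcHom hb (R := ℝ) with hφ
    have hcont : Continuous φ := (cfcHom_isClosedEmbedding hb).continuous
    have key : ∀ g : C(spectrum ℝ b, ℝ), Commute c (φ g) := by
      intro g
      induction g using ContinuousMap.induction_on_of_compact with
      | const r =>
        have : (ContinuousMap.const (spectrum ℝ b) r) = algebraMap ℝ C(spectrum ℝ b, ℝ) r := by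
          ext x; simp [Algebra.algebraMap_eq_smul_one]
        rw [this, AlgHomClass.commutes φ r]
        exact (Algebra.commutes r c).symm
      | id =>
        rw [cfcHom_id hb]
        exact hc
      | star_id =>
        have : star (ContinuousMap.restrict (spectrum ℝ b) (ContinuousMap.id ℝ)) =
            ContinuousMap.restrict (spectrum ℝ b) (ContinuousMap.id ℝ) := by
          ext x; simp
        rw [this, cfcHom_id hb]
        exact hc
      | add f g hfc hgc =>
        rw [map_add]
        exact hfc.add_right hgc
      | mul f g hfc hgc =>
        rw [map_mul]
        exact hfc.mul_right hgc
      | frequently g hg =>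
        have hcl : IsClosed {h : C(spectrum ℝ b, ℝ) | Commute c (φ h)} := by
          have : {h : C(spectrum ℝ b, ℝ) | Commute c (φ h)} =
              {h | c * φ h = φ h * c} := rfl
          rw [this]
          exact isClosed_eq (continuous_const.mul hcont) (hcont.mul continuous_const)
        have h2 : g ∈ closure {h : C(spectrum ℝ b, ℝ) | Commute c (φ h)} :=
          mem_closure_iff_frequently.mpr hg
        rwa [hcl.closure_eq] at h2
    exact key _
  · rw [cfc_apply_of_not_continuousOn b hf]
    exact Commute.zero_right c

set_option maxHeartbeats 1000000 in
/-- Any projection `p ∈ F` is equivalent to a subprojection of some member of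
any approximate unit of projections, with `‖p - p'‖` arbitrarily small. -/
theorem approxUnit_absorbs_projection
    {A : Type*} [NormedRing A] [StarRing A] [CStarRing A] [CompleteSpace A]
    [NormedAlgebra ℂ A] [StarModule ℂ A]
    (F : Set A) (hF : IsFiniteType F)
    {ι : Type} (rel : ι → ι → Prop) (u : ι → A) (hu : IsApproxUnit F rel u)
    (p : A) (hpF : p ∈ F) (hp : IsProjection p)
    (ε : ℝ) (hε : 0 < ε) :
    ∃ (α₀ : ι) (p' : A), IsProjection p' ∧ MvNEquiv p p' ∧
      p' * u α₀ = p' ∧ ‖p - p'‖ < ε := by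
  letI : CStarAlgebra A := { }
  obtain ⟨hps, hpi⟩ := hp
  rcases subsingleton_or_nontrivial A with hA | hA
  · obtain ⟨α₀⟩ := hu.nonempty
    refine ⟨α₀, p, ⟨hps, hpi⟩, ⟨p, by rw [hps]; exact hpi, by rw [hps]; exact hpi⟩,
      Subsingleton.elim _ _, by simp [hε]⟩
  set δ := min ε 1 / 8 with hδdef
  have hδpos : 0 < δ := by
    have h1 : 0 < min ε 1 := lt_min hε one_pos
    positivity
  have hδ8 : δ ≤ 1/8 := by
    have h1 : min ε 1 ≤ 1 := min_le_right _ _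
    rw [hδdef]; linarith
  have hδε : 4*δ ≤ ε/2 := by
    have h1 : min ε 1 ≤ ε := min_le_left _ _
    rw [hδdef]; linarith
  obtain ⟨α, hα⟩ := hu.approx p hpF δ hδpos
  obtain ⟨α₀, hα₀, -⟩ := hu.directed α α
  refine ⟨α₀, ?_⟩
  set q := u α₀ with hqdef
  obtain ⟨hqs, hqi⟩ := hu.proj α₀
  have hqp : ‖p - q * p‖ < δ := hα α₀ hα₀
  -- norms of projections
  have hpn : ‖p‖ ≤ 1 := by
    have h := CStarRing.norm_star_mul_self (x := p)
    rw [hps, hpi] at h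
    nlinarith [norm_nonneg p]
  have hqn : ‖q‖ ≤ 1 := by
    have h := CStarRing.norm_star_mul_self (x := q)
    rw [hqs, hqi] at h
    nlinarith [norm_nonneg q]
  have hpq : ‖p - p * q‖ < δ := by
    have h : p - p * q = star (p - q * p) := by
      simp [star_sub, star_mul, hps, hqdef, hqs]
    rw [h, norm_star]; exact hqp
  -- the auxiliary invertible positive element
  set b := p * q * p + (1 - p) with hbdef
  have hbs : IsSelfAdjoint b := by
    rw [IsSelfAdjoint, hbdef]
    simp [star_add, star_sub, star_mul, hps, hqdef, hqs, mul_assoc]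
  have hpb : p * b = p * q * p := by
    simp [hbdef, mul_add, mul_sub, mul_one, ← mul_assoc, hpi]
  have hbp : b * p = p * q * p := by
    simp [hbdef, add_mul, sub_mul, one_mul, mul_assoc, hpi]
  have hcomm : Commute p b := by
    show p * b = b * p
    rw [hpb, hbp]
  have hb1 : ‖b - 1‖ < δ := by
    have h1 : b - 1 = (p * q - p) * p := by
      rw [hbdef, sub_mul, hpi]; abel
    rw [h1]
    calc ‖(p * q - p) * p‖ ≤ ‖p * q - p‖ * ‖p‖ := norm_mul_le _ _
      _ ≤ ‖p * q - p‖ := by nlinarith [norm_nonneg (p * q - p)]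
      _ = ‖p - p * q‖ := norm_sub_rev _ _
      _ < δ := hpq
  have hspec : ∀ x ∈ spectrum ℝ b, |x - 1| < δ := by
    intro x hx
    have h1 : x - 1 ∈ spectrum ℝ (b - algebraMap ℝ A 1) := by
      rw [← spectrum.sub_singleton_eq]
      exact Set.sub_mem_sub hx rfl
    have h2 := spectrum.norm_le_norm_of_mem h1
    rw [map_one, Real.norm_eq_abs] at h2
    exact lt_of_le_of_lt h2 hb1
  have hxpos : ∀ x ∈ spectrum ℝ b, (1:ℝ)/2 ≤ x := by
    intro x hx
    have h := abs_lt.mp (hspec x hx)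
    linarith [h.1]
  -- inverse square root via continuous functional calculus
  set g : ℝ → ℝ := fun x => (Real.sqrt x)⁻¹ with hgdef
  have hgc : ContinuousOn g (spectrum ℝ b) := by
    apply ContinuousOn.inv₀ Real.continuous_sqrt.continuousOn
    intro x hx
    have h := hxpos x hx
    exact Real.sqrt_ne_zero'.mpr (by linarith)
  set r := cfc g b with hrdef
  have hrs : IsSelfAdjoint r := cfc_predicate g b
  have hpr : Commute p r := commute_cfc_of_commute hbs hcomm g
  have hbr : Commute b r := commute_cfc_of_commute hbs (Commute.refl b) g
  have hgx : ∀ x ∈ spectrum ℝ b, Real.sqrt x * Real.sqrt x = x := by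
    intro x hx
    exact Real.mul_self_sqrt (by linarith [hxpos x hx])
  have h1 : cfc (fun x => g x * x) b = r * b := by
    rw [cfc_mul g (fun x => x) b hgc (continuousOn_id' _), cfc_id' ℝ b]
  have hrbr : r * b * r = 1 := by
    have h2 : cfc (fun x => (g x * x) * g x) b = (r * b) * r := by
      rw [cfc_mul (fun x => g x * x) g b (hgc.mul (continuousOn_id' _)) hgc, h1]
    rw [← h2]
    have h3 : cfc (fun x => (g x * x) * g x) b = cfc (fun _ : ℝ => (1:ℝ)) b := by
      apply cfc_congr
      intro x hx
      have hs := hgx x hx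
      have hx0 : (0:ℝ) < x := by linarith [hxpos x hx]
      have hsne : Real.sqrt x ≠ 0 := Real.sqrt_ne_zero'.mpr hx0
      simp only [hgdef]
      field_simp
      rw [Real.sq_sqrt hx0.le]
    rw [h3, cfc_const 1 b hbs, map_one]
  have hrr : ‖r * r - 1‖ ≤ 2*δ := by
    have h4 : cfc (fun x => g x * g x - 1) b = r * r - 1 := by
      rw [cfc_sub (fun x => g x * g x) (fun _ => (1:ℝ)) b (hgc.mul hgc)
        (continuousOn_const), cfc_mul g g b hgc hgc, cfc_const 1 b hbs, map_one]
    rw [← h4]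
    apply norm_cfc_le (by positivity)
    intro x hx
    have hs := hgx x hx
    have hx0 : (0:ℝ) < x := by linarith [hxpos x hx]
    have hgg : g x * g x = x⁻¹ := by
      simp only [hgdef]
      rw [← mul_inv, hs]
    rw [hgg, Real.norm_eq_abs]
    have hxe : x⁻¹ - 1 = (1 - x) / x := by field_simp
    rw [hxe, abs_div, abs_of_pos hx0, div_le_iff₀ hx0]
    have habs := hspec x hx
    have h5 : |1 - x| = |x - 1| := abs_sub_comm _ _
    have h6 := hxpos x hx
    rw [h5]
    nlinarith [abs_nonneg (x-1), habs, hδpos]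
  -- the partial isometry
  set v := r * (p * q) with hvdef
  have hvstar : star v = q * (p * r) := by
    rw [hvdef]
    simp [star_mul, hps, hqdef, hqs, hrs.star_eq, mul_assoc]
  have hkey : ∀ x : A, p * (q * (p * x)) = p * (b * x) := by
    intro x
    calc p * (q * (p * x)) = (p * q * p) * x := by simp only [mul_assoc]
      _ = (p * b) * x := by rw [← hpb]
      _ = p * (b * x) := by rw [mul_assoc]
  have hv1 : v * star v = p := by
    calc v * star v = r * (p * (q * (q * (p * r)))) := by
          rw [hvdef, hvstar]; simp only [mul_assoc]
      _ = r * (p * (q * (p * r))) := by rw [← mul_assoc q q, hqi]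
      _ = r * (p * (b * r)) := by rw [hkey]
      _ = r * (b * (p * r)) := by rw [← mul_assoc p b, hcomm.eq, mul_assoc]
      _ = r * (b * (r * p)) := by rw [hpr.eq]
      _ = (r * b * r) * p := by simp only [mul_assoc]
      _ = p := by rw [hrbr, one_mul]
  have hpv : p * v = v := by
    calc p * v = r * (p * (p * q)) := by
          rw [hvdef, ← mul_assoc, hpr.eq, mul_assoc]
      _ = v := by rw [← mul_assoc p p, hpi, hvdef]
  have hvq : v * q = v := by
    rw [hvdef]
    simp only [mul_assoc]
    rw [hqi]
  set p' := star v * v with hp'def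
  have hp's : star p' = p' := by
    rw [hp'def]
    simp [star_mul, star_star, mul_assoc]
  have hp'i : p' * p' = p' := by
    calc p' * p' = star v * ((v * star v) * v) := by rw [hp'def]; simp only [mul_assoc]
      _ = star v * (p * v) := by rw [hv1]
      _ = p' := by rw [hpv, hp'def]
  have hp'q : p' * q = p' := by
    rw [hp'def, mul_assoc, hvq]
  -- norm estimates
  have hmulq : ∀ x : A, ‖q * x‖ ≤ ‖x‖ := fun x =>
    le_trans (norm_mul_le q x) (by nlinarith [norm_nonneg x])
  have hmulp : ∀ x : A, ‖p * x‖ ≤ ‖x‖ := fun x =>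
    le_trans (norm_mul_le p x) (by nlinarith [norm_nonneg x])
  have hpqn : ‖p * q‖ ≤ 1 := le_trans (norm_mul_le p q) (by nlinarith [norm_nonneg p, norm_nonneg q])
  have hqpq : ‖p - q * (p * q)‖ < 2*δ := by
    have hsplit : p - q * (p * q) = (p - q * p) + q * (p - p * q) := by noncomm_ring
    calc ‖p - q * (p * q)‖ = ‖(p - q * p) + q * (p - p * q)‖ := by rw [hsplit]
      _ ≤ ‖p - q * p‖ + ‖q * (p - p * q)‖ := norm_add_le _ _
      _ ≤ ‖p - q * p‖ + ‖p - p * q‖ := by linarith [hmulq (p - p * q)]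
      _ < 2*δ := by linarith
  have he1 : q * (p * (p * q)) = q * (p * q) := by rw [← mul_assoc p p, hpi]
  have hp'e : p' - q * (p * q) = q * (p * ((r * r - 1) * (p * q))) := by
    rw [hp'def, hvstar, hvdef, ← he1]
    noncomm_ring
  have hnorm2 : ‖p' - q * (p * q)‖ ≤ 2*δ := by
    rw [hp'e]
    calc ‖q * (p * ((r * r - 1) * (p * q)))‖ ≤ ‖p * ((r * r - 1) * (p * q))‖ := hmulq _
      _ ≤ ‖(r * r - 1) * (p * q)‖ := hmulp _
      _ ≤ ‖r * r - 1‖ * ‖p * q‖ := norm_mul_le _ _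
      _ ≤ 2*δ := by nlinarith [norm_nonneg (r*r-1), norm_nonneg (p*q)]
  refine ⟨p', ⟨hp's, hp'i⟩, ⟨v, hv1, hp'def.symm⟩, hp'q, ?_⟩
  calc ‖p - p'‖ = ‖(p - q * (p * q)) + (q * (p * q) - p')‖ := by
        congr 1; abel
    _ ≤ ‖p - q * (p * q)‖ + ‖q * (p * q) - p'‖ := norm_add_le _ _
    _ = ‖p - q * (p * q)‖ + ‖p' - q * (p * q)‖ := by rw [norm_sub_rev (q * (p * q)) p']
    _ < 2*δ + 2*δ := by linarith
    _ ≤ ε/2 := by linarith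
    _ < ε := by linarith
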